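/- If F is an induced-2C2-free family of subsets of [n], then for any two sets F_1, F_2 ∈ F, the open downsets are comparable: either D_F(F_1) ⊆ D_F(F_2) or D_F(F_2) ⊆ D_F(F_1). -/
import Mathlib


/-- `F ⊆ 𝒫([n])` contains an induced copy of the poset `2C₂`: four sets
`A ⊊ A'`, `B ⊊ B'`, with each of `A, A'` incomparable to each of `B, B'`. -/
def Contains2C2 {n : ℕ} (F : Finset (Finset (Fin n))) : Prop :=
  ∃ A A' B B' : Finset (Fin n), A ∈ F ∧ A' ∈ F ∧ B ∈ F ∧ B' ∈ F ∧
    A ⊂ A' ∧ B ⊂ B' ∧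
    ¬ A ⊆ B ∧ ¬ B ⊆ A ∧ ¬ A ⊆ B' ∧ ¬ B' ⊆ A ∧
    ¬ A' ⊆ B ∧ ¬ B ⊆ A' ∧ ¬ A' ⊆ B' ∧ ¬ B' ⊆ A'

/-- `F` is induced-`2C₂`-saturated: it is induced-`2C₂`-free, and adding any
missing set creates an induced copy of `2C₂`. -/
def Saturated2C2 {n : ℕ} (F : Finset (Finset (Fin n))) : Prop :=
  ¬ Contains2C2 F ∧ ∀ S : Finset (Fin n), S ∉ F → Contains2C2 (insert S F)

/-- If `F` is induced-`2C₂`-free, then the open downsets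
`D_F(S) = {G ∈ F : G ⊊ S}` of any two members of `F` are comparable. -/
theorem downsets_comparable (n : ℕ)
    (F : Finset (Finset (Fin n))) (hF : ¬ Contains2C2 F)
    (F₁ F₂ : Finset (Fin n)) (h₁ : F₁ ∈ F) (h₂ : F₂ ∈ F) :
    F.filter (fun G => G ⊂ F₁) ⊆ F.filter (fun G => G ⊂ F₂) ∨
    F.filter (fun G => G ⊂ F₂) ⊆ F.filter (fun G => G ⊂ F₁) := by
  by_contra hc
  push_neg at hc
  obtain ⟨hAB, hBA⟩ := hc
  obtain ⟨A, hA, hAn⟩ := Finset.not_subset.mp hAB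
  obtain ⟨B, hB, hBn⟩ := Finset.not_subset.mp hBA
  simp only [Finset.mem_filter] at hA hB hAn hBn
  obtain ⟨hAF, hA1⟩ := hA
  obtain ⟨hBF, hB2⟩ := hB
  have hA2 : ¬ A ⊂ F₂ := fun h => hAn ⟨hAF, h⟩
  have hB1 : ¬ B ⊂ F₁ := fun h => hBn ⟨hBF, h⟩
  have h12 : ¬ F₁ ⊆ F₂ := fun h => hA2 (hA1.trans_subset h)
  have h21 : ¬ F₂ ⊆ F₁ := fun h => hB1 (hB2.trans_subset h)
  have hAF2 : ¬ A ⊆ F₂ := fun h => by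
    rcases h.ssubset_or_eq with h' | h'
    · exact hA2 h'
    · exact h21 (h' ▸ hA1.subset)
  have hF2A : ¬ F₂ ⊆ A := fun h => h21 (h.trans_ssubset hA1).subset
  have hBF1 : ¬ B ⊆ F₁ := fun h => by
    rcases h.ssubset_or_eq with h' | h'
    · exact hB1 h'
    · exact h12 (h' ▸ hB2.subset)
  have hF1B : ¬ F₁ ⊆ B := fun h => h12 (h.trans_ssubset hB2).subset
  have hAB' : ¬ A ⊆ B := fun h => hA2 (h.trans_ssubset hB2)
  have hBA' : ¬ B ⊆ A := fun h => hB1 (h.trans_ssubset hA1)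
  exact hF ⟨A, F₁, B, F₂, hAF, h₁, hBF, h₂, hA1, hB2,
    hAB', hBA', hAF2, hF2A, hF1B, hBF1, h12, h21⟩
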